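/- (Discrete-continuous Gronwall with jumps.) Let T > 0 and 0 = t₀ < t₁ < ⋯ < t_N < t_{N+1} = T. Let f, g, h : [0,T] → ℝ₊ be locally integrable nonnegative functions such that for positive constants c₀, c₁, C: ∫₀ᵀ h(t) dt ≤ C; on each open interval (t_j, t_{j+1}), f is absolutely continuous with f'(t) + g(t) ≤ C f(t) + c₀² h(t) and f(t) ≥ c₀; and at each t_j, f(t_j+) ≤ (1 + c₁) f(t_j−). Then there is a constant C' > 0 independent of c₀, c₁ such that for a.e. t ∈ [0,T]: f(t) ≤ f(0) exp(C'T + C'c₀ + N c₁), and ∫₀ᵀ g(t) dt ≤ f(0)(1 + C'T + N c₁) exp(C'T + C'c₀ + N c₁) + C' c₀². -/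

import Mathlib

open MeasureTheory Filter Set Topology intervalIntegral

private lemma tmono_aux (t : ℕ → ℝ) (N : ℕ) (ht : ∀ j ≤ N, t j < t (j + 1)) :
    ∀ i j, i ≤ j → j ≤ N + 1 → t i ≤ t j := by
  intro i j hij hjN
  induction j with
  | zero => interval_cases i; exact le_rfl
  | succ k ih =>
    rcases Nat.lt_succ_iff_lt_or_eq.mp (Nat.lt_succ_of_le hij) with hk | hk
    · exact (ih (Nat.lt_succ_iff.mp hk) (by omega)).trans (ht k (by omega)).le
    · exact le_of_eq (by rw [hk])

private lemma cover_aux (t : ℕ → ℝ) (N : ℕ) (s : ℝ) (h1 : t 0 ≤ s) (h2 : s ≤ t (N + 1)) :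
    (∃ j ≤ N + 1, s = t j) ∨ ∃ j ≤ N, s ∈ Set.Ioo (t j) (t (j + 1)) := by
  induction N with
  | zero =>
    rcases h1.lt_or_eq with hl | hl
    · rcases h2.lt_or_eq with hr | hr
      · exact Or.inr ⟨0, le_rfl, hl, hr⟩
      · exact Or.inl ⟨1, le_rfl, hr⟩
    · exact Or.inl ⟨0, by omega, hl.symm⟩
  | succ n ih =>
    rcases le_or_gt s (t (n + 1)) with hle | hlt
    · rcases ih hle with ⟨j, hj, e⟩ | ⟨j, hj, m⟩
      · exact Or.inl ⟨j, by omega, e⟩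
      · exact Or.inr ⟨j, by omega, m⟩
    · rcases h2.lt_or_eq with hr | hr
      · exact Or.inr ⟨n + 1, le_rfl, hlt, hr⟩
      · exact Or.inl ⟨n + 2, le_rfl, hr⟩

/-- Discrete-continuous Gronwall inequality with multiplicative jumps at interaction
times `t₁ < ⋯ < t_N`. The constant `C'` is independent of `c₀, c₁` (it depends only
on the constant `C` of the hypotheses). -/
theorem gronwall_with_jumps (C : ℝ) (hC : 0 < C) :
    ∃ C' : ℝ, 0 < C' ∧
      ∀ (c₀ c₁ : ℝ), 0 < c₀ → 0 < c₁ →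
      ∀ (T : ℝ) (N : ℕ) (t : ℕ → ℝ) (f g h : ℝ → ℝ) (fp fm : ℕ → ℝ),
        0 < T → t 0 = 0 → t (N + 1) = T →
        (∀ j ≤ N, t j < t (j + 1)) →
        (∀ s ∈ Icc (0 : ℝ) T, 0 ≤ f s ∧ 0 ≤ g s ∧ 0 ≤ h s) →
        IntervalIntegrable g volume 0 T →
        IntervalIntegrable h volume 0 T →
        (∫ s in (0 : ℝ)..T, h s) ≤ C →
        (∀ j ≤ N, ∀ s ∈ Ioo (t j) (t (j + 1)),
            HasDerivAt f (deriv f s) s ∧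
            deriv f s + g s ≤ C * f s + c₀ ^ 2 * h s ∧ c₀ ≤ f s) →
        Tendsto f (nhdsWithin 0 (Ioi (0 : ℝ))) (nhds (f 0)) →
        (∀ j, 1 ≤ j → j ≤ N →
            Tendsto f (nhdsWithin (t j) (Ioi (t j))) (nhds (fp j)) ∧
            Tendsto f (nhdsWithin (t j) (Iio (t j))) (nhds (fm j))) →
        (∀ j, 1 ≤ j → j ≤ N → fp j ≤ (1 + c₁) * fm j) →
        (∀ᵐ s ∂(volume.restrict (Icc (0 : ℝ) T)),
            f s ≤ f 0 * Real.exp (C' * T + C' * c₀ + N * c₁)) ∧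
        (∫ s in (0 : ℝ)..T, g s) ≤
          f 0 * (1 + C' * T + N * c₁) * Real.exp (C' * T + C' * c₀ + N * c₁) +
            C' * c₀ ^ 2 := by
  refine ⟨C, hC, ?_⟩
  intro c₀ c₁ hc₀ hc₁ T N t f g h fp fm hT ht0 htN hlt hnn hg hh hhC hode hf0 hlim hjump
  -- basic facts about the subdivision
  have htm : ∀ i j, i ≤ j → j ≤ N + 1 → t i ≤ t j := tmono_aux t N hlt
  have htj0 : ∀ j, j ≤ N + 1 → (0 : ℝ) ≤ t j := fun j hj => ht0 ▸ htm 0 j (Nat.zero_le _) hj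
  have htjT : ∀ j, j ≤ N + 1 → t j ≤ T := fun j hj => htN ▸ htm j (N + 1) hj le_rfl
  have hIsub : ∀ j ≤ N, Ioo (t j) (t (j + 1)) ⊆ Icc 0 T := by
    intro j hj s hs
    exact ⟨(htj0 j (by omega)).trans hs.1.le, hs.2.le.trans (htjT (j + 1) (by omega))⟩
  have hT0 : (0 : ℝ) ≤ T := hT.le
  -- primitives of g and h
  set P : ℝ → ℝ := fun x => ∫ s in (0 : ℝ)..x, g s with hPdef
  set Q : ℝ → ℝ := fun x => ∫ s in (0 : ℝ)..x, h s with hQdef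
  have hPc : ContinuousOn P (Icc 0 T) := by
    have := continuousOn_primitive_interval' (μ := volume) hg (left_mem_uIcc)
    rwa [uIcc_of_le hT0] at this
  have hQc : ContinuousOn Q (Icc 0 T) := by
    have := continuousOn_primitive_interval' (μ := volume) hh (left_mem_uIcc)
    rwa [uIcc_of_le hT0] at this
  have hmemT : ∀ x y, x ∈ Icc (0:ℝ) T → y ∈ Icc (0:ℝ) T → uIcc x y ⊆ Icc (0:ℝ) T := by
    intro x y hx hy
    rw [← uIcc_of_le hT0]
    exact uIcc_subset_uIcc (by rwa [uIcc_of_le hT0]) (by rwa [uIcc_of_le hT0])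
  have hgint : ∀ x y, x ∈ Icc (0:ℝ) T → y ∈ Icc (0:ℝ) T → IntervalIntegrable g volume x y := by
    intro x y hx hy
    exact hg.mono_set (by rw [uIcc_of_le hT0]; exact hmemT x y hx hy)
  have hhint : ∀ x y, x ∈ Icc (0:ℝ) T → y ∈ Icc (0:ℝ) T → IntervalIntegrable h volume x y := by
    intro x y hx hy
    exact hh.mono_set (by rw [uIcc_of_le hT0]; exact hmemT x y hx hy)
  have h0T : (0:ℝ) ∈ Icc (0:ℝ) T := ⟨le_rfl, hT0⟩
  have hTT : T ∈ Icc (0:ℝ) T := ⟨hT0, le_rfl⟩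
  have hPsub : ∀ x y, x ∈ Icc (0:ℝ) T → y ∈ Icc (0:ℝ) T → P y - P x = ∫ s in x..y, g s := by
    intro x y hx hy
    exact integral_interval_sub_left (hgint 0 y h0T hy) (hgint 0 x h0T hx)
  have hQsub : ∀ x y, x ∈ Icc (0:ℝ) T → y ∈ Icc (0:ℝ) T → Q y - Q x = ∫ s in x..y, h s := by
    intro x y hx hy
    exact integral_interval_sub_left (hhint 0 y h0T hy) (hhint 0 x h0T hx)
  have hQmono : ∀ x y, 0 ≤ x → x ≤ y → y ≤ T → Q x ≤ Q y := by
    intro x y hx hxy hy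
    have hxT : x ∈ Icc (0:ℝ) T := ⟨hx, hxy.trans hy⟩
    have hyT : y ∈ Icc (0:ℝ) T := ⟨hx.trans hxy, hy⟩
    have h1 : (0:ℝ) ≤ ∫ s in x..y, h s :=
      intervalIntegral.integral_nonneg (μ := volume) hxy
        (fun u hu => (hnn u ⟨hx.trans hu.1, hu.2.trans hy⟩).2.2)
    linarith [hQsub x y hxT hyT]
  have hQ0 : Q 0 = 0 := integral_same
  have hQT : Q T ≤ C := hhC
  have hQd : ∀ x y, 0 ≤ x → x ≤ y → y ≤ T → Q y - Q x ≤ C := by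
    intro x y hx hxy hy
    have h1 := hQmono 0 x le_rfl hx (hxy.trans hy)
    have h2 := hQmono y T (hx.trans hxy) hy le_rfl
    rw [hQ0] at h1; linarith
  -- the jump-start values
  set Fp : ℕ → ℝ := fun j => if j = 0 then f 0 else fp j with hFpdef
  have hFptend : ∀ j ≤ N, Tendsto f (𝓝[>] (t j)) (𝓝 (Fp j)) := by
    intro j hj
    rcases Nat.eq_zero_or_pos j with rfl | hjpos
    · simpa [hFpdef, ht0] using hf0
    · simpa [hFpdef, Nat.pos_iff_ne_zero.mp hjpos] using (hlim j hjpos hj).1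
  have hfpos : ∀ j ≤ N, ∀ s ∈ Ioo (t j) (t (j + 1)), 0 < f s := by
    intro j hj s hs
    exact lt_of_lt_of_le hc₀ (hode j hj s hs).2.2
  -- Lemma A : per-interval Gronwall via the logarithm
  have hA : ∀ j ≤ N, ∀ x ∈ Ioo (t j) (t (j + 1)), ∀ y ∈ Ioo (t j) (t (j + 1)), x ≤ y →
      f y ≤ f x * Real.exp (C * (y - x) + c₀ * (Q y - Q x)) := by
    intro j hj x hx y hy hxy
    have hIccsub : Icc x y ⊆ Ioo (t j) (t (j + 1)) :=
      fun s hs => ⟨hx.1.trans_le hs.1, lt_of_le_of_lt hs.2 hy.2⟩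
    have hxT : x ∈ Icc (0:ℝ) T := hIsub j hj hx
    have hyT : y ∈ Icc (0:ℝ) T := hIsub j hj hy
    have hfc : ∀ s ∈ Icc x y, 0 < f s := fun s hs => hfpos j hj s (hIccsub hs)
    have key : Real.log (f y) - Real.log (f x) ≤ ∫ s in x..y, (C + c₀ * h s) := by
      apply sub_le_integral_of_hasDeriv_right_of_le (g := fun s => Real.log (f s))
        (g' := fun s => deriv f s / f s) (φ := fun s => C + c₀ * h s) hxy
      · intro s hs
        exact ((Real.continuousAt_log (ne_of_gt (hfc s hs))).comp
          (hode j hj s (hIccsub hs)).1.continuousAt).continuousWithinAt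
      · intro s hs
        have hsm := hIccsub (Ioo_subset_Icc_self hs)
        exact (((hode j hj s hsm).1.log (ne_of_gt (hfpos j hj s hsm)))).hasDerivWithinAt
      · exact (integrableOn_const measure_Icc_lt_top.ne).add
          (((integrableOn_Icc_iff_integrableOn_Ioc).mpr (hhint x y hxT hyT).1).const_mul c₀)
      · intro s hs
        have hsm := hIccsub (Ioo_subset_Icc_self hs)
        obtain ⟨hd, hineq, hcf⟩ := hode j hj s hsm
        have hfs : 0 < f s := hfpos j hj s hsm
        have hsT : s ∈ Icc (0:ℝ) T := hIsub j hj hsm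
        have hgs : 0 ≤ g s := (hnn s hsT).2.1
        have hhs : 0 ≤ h s := (hnn s hsT).2.2
        rw [div_le_iff₀ hfs]
        have h5 : c₀ * h s ≤ f s * h s := mul_le_mul_of_nonneg_right hcf hhs
        have h6 : c₀ * (c₀ * h s) ≤ c₀ * (f s * h s) := mul_le_mul_of_nonneg_left h5 hc₀.le
        nlinarith [h6]
    have hintc : (∫ s in x..y, (C + c₀ * h s)) = C * (y - x) + c₀ * (Q y - Q x) := by
      rw [intervalIntegral.integral_add intervalIntegrable_const
        ((hhint x y hxT hyT).const_mul c₀), intervalIntegral.integral_const_mul,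
        intervalIntegral.integral_const, ← hQsub x y hxT hyT]
      simp [smul_eq_mul]
      ring
    have hfx : 0 < f x := hfc x ⟨le_rfl, hxy⟩
    have hfy : 0 < f y := hfc y ⟨hxy, le_rfl⟩
    calc f y = Real.exp (Real.log (f y)) := (Real.exp_log hfy).symm
      _ ≤ Real.exp (Real.log (f x) + (C * (y - x) + c₀ * (Q y - Q x))) := by
          apply Real.exp_le_exp.mpr
          rw [hintc] at key; linarith
      _ = f x * Real.exp (C * (y - x) + c₀ * (Q y - Q x)) := by
          rw [Real.exp_add, Real.exp_log hfx]
  -- Lemma B : bound by the limit from the right at t j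
  have hB : ∀ j ≤ N, ∀ y ∈ Ioo (t j) (t (j + 1)),
      f y ≤ Fp j * Real.exp (C * (y - t j) + c₀ * (Q y - Q (t j))) := by
    intro j hj y hy
    have hjT : t j ∈ Icc (0:ℝ) T := ⟨htj0 j (by omega), htjT j (by omega)⟩
    have hyT : y ∈ Icc (0:ℝ) T := hIsub j hj hy
    have hev : ∀ᶠ x in 𝓝[>] (t j),
        f y ≤ f x * Real.exp (C * (y - t j) + c₀ * (Q y - Q (t j))) := by
      filter_upwards [Ioo_mem_nhdsGT_of_mem ⟨le_rfl, hy.1⟩] with x hx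
      have hxI : x ∈ Ioo (t j) (t (j + 1)) := ⟨hx.1, hx.2.trans hy.2⟩
      have hxT : x ∈ Icc (0:ℝ) T := hIsub j hj hxI
      have hQle : Q (t j) ≤ Q x := hQmono _ _ hjT.1 hx.1.le hxT.2
      have hexp : Real.exp (C * (y - x) + c₀ * (Q y - Q x)) ≤
          Real.exp (C * (y - t j) + c₀ * (Q y - Q (t j))) := by
        apply Real.exp_le_exp.mpr
        nlinarith [mul_nonneg hC.le (sub_nonneg.mpr hx.1.le),
          mul_le_mul_of_nonneg_left hQle hc₀.le]
      exact (hA j hj x hxI y hy hx.2.le).trans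
        (mul_le_mul_of_nonneg_left hexp (hfpos j hj x hxI).le)
    exact ge_of_tendsto ((hFptend j hj).mul_const _) hev
  have hFpnn : ∀ j ≤ N, 0 ≤ Fp j := by
    intro j hj
    have hev : ∀ᶠ x in 𝓝[>] (t j), 0 ≤ f x := by
      filter_upwards [Ioo_mem_nhdsGT_of_mem ⟨le_rfl, hlt j hj⟩] with x hx
      exact (hnn x (hIsub j hj hx)).1
    exact ge_of_tendsto (hFptend j hj) hev
  -- Lemma C : bound on left limits
  have hfmle : ∀ j, j + 1 ≤ N → fm (j + 1) ≤
      Fp j * Real.exp (C * (t (j + 1) - t j) + c₀ * (Q (t (j + 1)) - Q (t j))) := by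
    intro j hjN
    have hj : j ≤ N := by omega
    have hj1T : t (j + 1) ∈ Icc (0:ℝ) T := ⟨htj0 _ (by omega), htjT _ (by omega)⟩
    have hev : ∀ᶠ y in 𝓝[<] (t (j + 1)), f y ≤
        Fp j * Real.exp (C * (t (j + 1) - t j) + c₀ * (Q (t (j + 1)) - Q (t j))) := by
      filter_upwards [Ioo_mem_nhdsLT_of_mem ⟨hlt j hj, le_rfl⟩] with y hy
      have hyT : y ∈ Icc (0:ℝ) T := hIsub j hj hy
      have hQle : Q y ≤ Q (t (j + 1)) := hQmono _ _ hyT.1 hy.2.le hj1T.2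
      have hexp : Real.exp (C * (y - t j) + c₀ * (Q y - Q (t j))) ≤
          Real.exp (C * (t (j + 1) - t j) + c₀ * (Q (t (j + 1)) - Q (t j))) := by
        apply Real.exp_le_exp.mpr
        nlinarith [mul_nonneg hC.le (sub_nonneg.mpr hy.2.le),
          mul_le_mul_of_nonneg_left hQle hc₀.le]
      exact (hB j hj y hy).trans (mul_le_mul_of_nonneg_left hexp (hFpnn j hj))
    exact le_of_tendsto (hlim (j + 1) (by omega) hjN).2 hev
  -- Lemma D : induction along the intervals
  have hFpbound : ∀ j ≤ N, Fp j ≤ f 0 * (1 + c₁) ^ j * Real.exp (C * t j + c₀ * Q (t j)) := by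
    intro j
    induction j with
    | zero =>
      intro _
      simp [hFpdef, ht0, hQ0]
    | succ n ih =>
      intro hn
      have hn' : n ≤ N := by omega
      have heq : Real.exp (C * t n + c₀ * Q (t n)) *
          Real.exp (C * (t (n + 1) - t n) + c₀ * (Q (t (n + 1)) - Q (t n))) =
          Real.exp (C * t (n + 1) + c₀ * Q (t (n + 1))) := by
        rw [← Real.exp_add]; congr 1; ring
      calc Fp (n + 1) = fp (n + 1) := by simp [hFpdef]
        _ ≤ (1 + c₁) * fm (n + 1) := hjump (n + 1) (by omega) hn
        _ ≤ (1 + c₁) * (Fp n *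
            Real.exp (C * (t (n + 1) - t n) + c₀ * (Q (t (n + 1)) - Q (t n)))) :=
            mul_le_mul_of_nonneg_left (hfmle n hn) (by linarith)
        _ ≤ (1 + c₁) * ((f 0 * (1 + c₁) ^ n * Real.exp (C * t n + c₀ * Q (t n))) *
            Real.exp (C * (t (n + 1) - t n) + c₀ * (Q (t (n + 1)) - Q (t n)))) :=
            mul_le_mul_of_nonneg_left
              (mul_le_mul_of_nonneg_right (ih hn') (Real.exp_pos _).le) (by linarith)
        _ = f 0 * (1 + c₁) ^ (n + 1) * Real.exp (C * t (n + 1) + c₀ * Q (t (n + 1))) := by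
            rw [mul_assoc (f 0 * (1 + c₁) ^ n), heq]; ring
  set M : ℝ := f 0 * Real.exp (C * T + C * c₀ + N * c₁) with hMdef
  have hf0nn : 0 ≤ f 0 := (hnn 0 (by constructor <;> simp [hT0])).1
  -- the pointwise bound
  have hMbound : ∀ j ≤ N, ∀ s ∈ Ioo (t j) (t (j + 1)), f s ≤ M := by
    intro j hj s hs
    have hsT : s ∈ Icc (0:ℝ) T := hIsub j hj hs
    have hjT : t j ∈ Icc (0:ℝ) T := ⟨htj0 j (by omega), htjT j (by omega)⟩
    have step1 : f s ≤ f 0 * (1 + c₁) ^ j * Real.exp (C * s + c₀ * Q s) := by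
      have heq : Real.exp (C * t j + c₀ * Q (t j)) *
          Real.exp (C * (s - t j) + c₀ * (Q s - Q (t j))) =
          Real.exp (C * s + c₀ * Q s) := by
        rw [← Real.exp_add]; congr 1; ring
      calc f s ≤ Fp j * Real.exp (C * (s - t j) + c₀ * (Q s - Q (t j))) := hB j hj s hs
        _ ≤ (f 0 * (1 + c₁) ^ j * Real.exp (C * t j + c₀ * Q (t j))) *
            Real.exp (C * (s - t j) + c₀ * (Q s - Q (t j))) :=
            mul_le_mul_of_nonneg_right (hFpbound j hj) (Real.exp_pos _).le
        _ = f 0 * (1 + c₁) ^ j * Real.exp (C * s + c₀ * Q s) := by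
            rw [mul_assoc (f 0 * (1 + c₁) ^ j), heq]
    have step2 : (1 + c₁) ^ j ≤ Real.exp ((N : ℝ) * c₁) := by
      have e1 : (1 + c₁) ^ j ≤ Real.exp c₁ ^ j :=
        pow_le_pow_left₀ (by linarith) (by linarith [Real.add_one_le_exp c₁]) j
      have e2 : Real.exp c₁ ^ j = Real.exp ((j : ℝ) * c₁) := by
        rw [← Real.exp_nat_mul]
      have e3 : Real.exp ((j : ℝ) * c₁) ≤ Real.exp ((N : ℝ) * c₁) := by
        apply Real.exp_le_exp.mpr
        have : (j : ℝ) ≤ (N : ℝ) := Nat.cast_le.mpr hj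
        nlinarith
      calc (1 + c₁) ^ j ≤ Real.exp c₁ ^ j := e1
        _ = Real.exp ((j : ℝ) * c₁) := e2
        _ ≤ Real.exp ((N : ℝ) * c₁) := e3
    have step3 : Real.exp (C * s + c₀ * Q s) ≤ Real.exp (C * T + C * c₀) := by
      apply Real.exp_le_exp.mpr
      have hQsC : Q s ≤ C := by
        have := hQmono s T hsT.1 hsT.2 le_rfl
        linarith [hQT]
      nlinarith [mul_le_mul_of_nonneg_left hsT.2 hC.le,
        mul_le_mul_of_nonneg_left hQsC hc₀.le]
    have step4 : (1 + c₁) ^ j * Real.exp (C * s + c₀ * Q s) ≤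
        Real.exp ((N : ℝ) * c₁) * Real.exp (C * T + C * c₀) :=
      mul_le_mul step2 step3 (Real.exp_pos _).le (Real.exp_pos _).le
    have heq2 : Real.exp ((N : ℝ) * c₁) * Real.exp (C * T + C * c₀) =
        Real.exp (C * T + C * c₀ + (N : ℝ) * c₁) := by
      rw [← Real.exp_add]; congr 1; ring
    calc f s ≤ f 0 * (1 + c₁) ^ j * Real.exp (C * s + c₀ * Q s) := step1
      _ = f 0 * ((1 + c₁) ^ j * Real.exp (C * s + c₀ * Q s)) := by ring
      _ ≤ f 0 * (Real.exp ((N : ℝ) * c₁) * Real.exp (C * T + C * c₀)) :=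
          mul_le_mul_of_nonneg_left step4 hf0nn
      _ = M := by rw [heq2, hMdef]
  have hfmM : ∀ j, j + 1 ≤ N → fm (j + 1) ≤ M := by
    intro j hjN
    have hev : ∀ᶠ y in 𝓝[<] (t (j + 1)), f y ≤ M := by
      filter_upwards [Ioo_mem_nhdsLT_of_mem ⟨hlt j (by omega), le_rfl⟩] with y hy
      exact hMbound j (by omega) y hy
    exact le_of_tendsto (hlim (j + 1) (by omega) hjN).2 hev
  -- tendsto of primitives at the nodes
  have hPtendR : ∀ j ≤ N, Tendsto P (𝓝[>] (t j)) (𝓝 (P (t j))) := by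
    intro j hj
    have h1 : ContinuousWithinAt P (Icc 0 T) (t j) :=
      hPc (t j) ⟨htj0 j (by omega), htjT j (by omega)⟩
    have h3 : 𝓝[>] (t j) ≤ 𝓝[Icc (0:ℝ) T] (t j) := by
      rw [← nhdsWithin_Ioo_eq_nhdsGT (hlt j hj)]
      exact nhdsWithin_mono _ (hIsub j hj)
    exact h1.mono_left h3
  have hQtendR : ∀ j ≤ N, Tendsto Q (𝓝[>] (t j)) (𝓝 (Q (t j))) := by
    intro j hj
    have h1 : ContinuousWithinAt Q (Icc 0 T) (t j) :=
      hQc (t j) ⟨htj0 j (by omega), htjT j (by omega)⟩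
    have h3 : 𝓝[>] (t j) ≤ 𝓝[Icc (0:ℝ) T] (t j) := by
      rw [← nhdsWithin_Ioo_eq_nhdsGT (hlt j hj)]
      exact nhdsWithin_mono _ (hIsub j hj)
    exact h1.mono_left h3
  have hPtendL : ∀ j ≤ N, Tendsto P (𝓝[<] (t (j + 1))) (𝓝 (P (t (j + 1)))) := by
    intro j hj
    have h1 : ContinuousWithinAt P (Icc 0 T) (t (j + 1)) :=
      hPc (t (j + 1)) ⟨htj0 _ (by omega), htjT _ (by omega)⟩
    have h3 : 𝓝[<] (t (j + 1)) ≤ 𝓝[Icc (0:ℝ) T] (t (j + 1)) := by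
      rw [← nhdsWithin_Ioo_eq_nhdsLT (hlt j hj)]
      exact nhdsWithin_mono _ (hIsub j hj)
    exact h1.mono_left h3
  have hQtendL : ∀ j ≤ N, Tendsto Q (𝓝[<] (t (j + 1))) (𝓝 (Q (t (j + 1)))) := by
    intro j hj
    have h1 : ContinuousWithinAt Q (Icc 0 T) (t (j + 1)) :=
      hQc (t (j + 1)) ⟨htj0 _ (by omega), htjT _ (by omega)⟩
    have h3 : 𝓝[<] (t (j + 1)) ≤ 𝓝[Icc (0:ℝ) T] (t (j + 1)) := by
      rw [← nhdsWithin_Ioo_eq_nhdsLT (hlt j hj)]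
      exact nhdsWithin_mono _ (hIsub j hj)
    exact h1.mono_left h3
  -- core integral inequality for g on subintervals
  have hcore : ∀ j ≤ N, ∀ x ∈ Ioo (t j) (t (j + 1)), ∀ y ∈ Ioo (t j) (t (j + 1)), x ≤ y →
      P y - P x ≤ C * M * (y - x) + c₀ ^ 2 * (Q y - Q x) + f x - f y := by
    intro j hj x hx y hy hxy
    have hIccsub : Icc x y ⊆ Ioo (t j) (t (j + 1)) :=
      fun s hs => ⟨hx.1.trans_le hs.1, lt_of_le_of_lt hs.2 hy.2⟩
    have hxT : x ∈ Icc (0:ℝ) T := hIsub j hj hx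
    have hyT : y ∈ Icc (0:ℝ) T := hIsub j hj hy
    have hfc : ContinuousOn f (Icc x y) :=
      fun s hs => ((hode j hj s (hIccsub hs)).1.continuousAt).continuousWithinAt
    have hfi : IntervalIntegrable f volume x y :=
      (by rwa [uIcc_of_le hxy] : ContinuousOn f (uIcc x y)).intervalIntegrable
    have hfint : IntegrableOn f (Icc x y) := hfc.integrableOn_Icc
    have hgOn : IntegrableOn g (Icc x y) :=
      (integrableOn_Icc_iff_integrableOn_Ioc).mpr (hgint x y hxT hyT).1
    have hhOn : IntegrableOn h (Icc x y) :=
      (integrableOn_Icc_iff_integrableOn_Ioc).mpr (hhint x y hxT hyT).1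
    have key : (∫ s in x..y, (g s - C * f s - c₀ ^ 2 * h s)) ≤ (-f y) - (-f x) := by
      apply integral_le_sub_of_hasDeriv_right_of_le (g := fun s => -f s)
        (g' := fun s => -deriv f s) (φ := fun s => g s - C * f s - c₀ ^ 2 * h s) hxy
      · exact hfc.neg
      · intro s hs
        exact ((hode j hj s (hIccsub (Ioo_subset_Icc_self hs))).1.neg).hasDerivWithinAt
      · exact (hgOn.sub (hfint.const_mul C)).sub (hhOn.const_mul (c₀ ^ 2))
      · intro s hs
        have := (hode j hj s (hIccsub (Ioo_subset_Icc_self hs))).2.1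
        linarith
    have hsplit : (∫ s in x..y, (g s - C * f s - c₀ ^ 2 * h s)) =
        (P y - P x) - C * (∫ s in x..y, f s) - c₀ ^ 2 * (Q y - Q x) := by
      rw [intervalIntegral.integral_sub ((hgint x y hxT hyT).sub (hfi.const_mul C))
          ((hhint x y hxT hyT).const_mul (c₀ ^ 2)),
        intervalIntegral.integral_sub (hgint x y hxT hyT) (hfi.const_mul C),
        intervalIntegral.integral_const_mul, intervalIntegral.integral_const_mul,
        ← hPsub x y hxT hyT, ← hQsub x y hxT hyT]
    have hfub : (∫ s in x..y, f s) ≤ M * (y - x) := by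
      calc (∫ s in x..y, f s) ≤ ∫ _ in x..y, M :=
            intervalIntegral.integral_mono_on hxy hfi intervalIntegrable_const
              (fun s hs => hMbound j hj s (hIccsub hs))
        _ = M * (y - x) := by
            rw [intervalIntegral.integral_const, smul_eq_mul]; ring
    have hCf : C * (∫ s in x..y, f s) ≤ C * (M * (y - x)) :=
      mul_le_mul_of_nonneg_left hfub hC.le
    rw [hsplit] at key
    linarith
  -- interval bound with left limit at the right endpoint (interior intervals)
  have hPj1 : ∀ j ≤ N, ∀ y ∈ Ioo (t j) (t (j + 1)),
      P y - P (t j) ≤ C * M * (y - t j) + c₀ ^ 2 * (Q y - Q (t j)) + Fp j - f y := by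
    intro j hj y hy
    have hev : (fun x => P y - P x) ≤ᶠ[𝓝[>] (t j)]
        (fun x => C * M * (y - x) + c₀ ^ 2 * (Q y - Q x) + f x - f y) := by
      filter_upwards [Ioo_mem_nhdsGT_of_mem ⟨le_rfl, hy.1⟩] with x hx
      exact hcore j hj x ⟨hx.1, hx.2.trans hy.2⟩ y hy hx.2.le
    have hid : Tendsto (fun x : ℝ => x) (𝓝[>] (t j)) (𝓝 (t j)) :=
      tendsto_id.mono_left nhdsWithin_le_nhds
    have hl : Tendsto (fun x => P y - P x) (𝓝[>] (t j)) (𝓝 (P y - P (t j))) :=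
      tendsto_const_nhds.sub (hPtendR j hj)
    have hr : Tendsto (fun x => C * M * (y - x) + c₀ ^ 2 * (Q y - Q x) + f x - f y)
        (𝓝[>] (t j))
        (𝓝 (C * M * (y - t j) + c₀ ^ 2 * (Q y - Q (t j)) + Fp j - f y)) := by
      exact ((((tendsto_const_nhds.sub hid).const_mul (C * M)).add
        ((tendsto_const_nhds.sub (hQtendR j hj)).const_mul (c₀ ^ 2))).add
        (hFptend j hj)).sub tendsto_const_nhds
    exact le_of_tendsto_of_tendsto hl hr hev
  have hPj1' : ∀ j, j + 1 ≤ N → P (t (j + 1)) - P (t j) ≤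
      C * M * (t (j + 1) - t j) + c₀ ^ 2 * (Q (t (j + 1)) - Q (t j)) + Fp j - fm (j + 1) := by
    intro j hjN
    have hj : j ≤ N := by omega
    have hev : (fun y => P y - P (t j)) ≤ᶠ[𝓝[<] (t (j + 1))]
        (fun y => C * M * (y - t j) + c₀ ^ 2 * (Q y - Q (t j)) + Fp j - f y) := by
      filter_upwards [Ioo_mem_nhdsLT_of_mem ⟨hlt j hj, le_rfl⟩] with y hy
      exact hPj1 j hj y hy
    have hid : Tendsto (fun y : ℝ => y) (𝓝[<] (t (j + 1))) (𝓝 (t (j + 1))) :=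
      tendsto_id.mono_left nhdsWithin_le_nhds
    have hl : Tendsto (fun y => P y - P (t j)) (𝓝[<] (t (j + 1)))
        (𝓝 (P (t (j + 1)) - P (t j))) := (hPtendL j hj).sub tendsto_const_nhds
    have hr : Tendsto (fun y => C * M * (y - t j) + c₀ ^ 2 * (Q y - Q (t j)) + Fp j - f y)
        (𝓝[<] (t (j + 1)))
        (𝓝 (C * M * (t (j + 1) - t j) + c₀ ^ 2 * (Q (t (j + 1)) - Q (t j)) + Fp j -
          fm (j + 1))) := by
      exact ((((hid.sub tendsto_const_nhds).const_mul (C * M)).add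
        (((hQtendL j hj).sub tendsto_const_nhds).const_mul (c₀ ^ 2))).add
        tendsto_const_nhds).sub (hlim (j + 1) (by omega) hjN).2
    exact le_of_tendsto_of_tendsto hl hr hev
  have hPlast : P (t (N + 1)) - P (t N) ≤
      C * M * (t (N + 1) - t N) + c₀ ^ 2 * (Q (t (N + 1)) - Q (t N)) + Fp N := by
    have hev : (fun y => P y - P (t N)) ≤ᶠ[𝓝[<] (t (N + 1))]
        (fun y => C * M * (y - t N) + c₀ ^ 2 * (Q y - Q (t N)) + Fp N) := by
      filter_upwards [Ioo_mem_nhdsLT_of_mem ⟨hlt N le_rfl, le_rfl⟩] with y hy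
      have h1 := hPj1 N le_rfl y hy
      have h2 : 0 ≤ f y := (hnn y (hIsub N le_rfl hy)).1
      linarith
    have hid : Tendsto (fun y : ℝ => y) (𝓝[<] (t (N + 1))) (𝓝 (t (N + 1))) :=
      tendsto_id.mono_left nhdsWithin_le_nhds
    have hl : Tendsto (fun y => P y - P (t N)) (𝓝[<] (t (N + 1)))
        (𝓝 (P (t (N + 1)) - P (t N))) := (hPtendL N le_rfl).sub tendsto_const_nhds
    have hr : Tendsto (fun y => C * M * (y - t N) + c₀ ^ 2 * (Q y - Q (t N)) + Fp N)
        (𝓝[<] (t (N + 1)))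
        (𝓝 (C * M * (t (N + 1) - t N) + c₀ ^ 2 * (Q (t (N + 1)) - Q (t N)) + Fp N)) := by
      exact (((hid.sub tendsto_const_nhds).const_mul (C * M)).add
        (((hQtendL N le_rfl).sub tendsto_const_nhds).const_mul (c₀ ^ 2))).add
        tendsto_const_nhds
    exact le_of_tendsto_of_tendsto hl hr hev
  constructor
  · -- a.e. bound
    have hnull : ∀ᵐ s ∂(volume : Measure ℝ), ∀ j ∈ Finset.range (N + 2), s ≠ t j := by
      rw [eventually_all_finset]
      intro j _
      have h1 : (volume : Measure ℝ) {t j} = 0 := measure_singleton _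
      have h2 := measure_eq_zero_iff_ae_notMem.mp h1
      filter_upwards [h2] with s hs
      simpa using hs
    have hnull' : ∀ᵐ s ∂(volume.restrict (Icc (0:ℝ) T)), ∀ j ∈ Finset.range (N + 2), s ≠ t j :=
      hnull.filter_mono (ae_mono Measure.restrict_le_self)
    filter_upwards [hnull', ae_restrict_mem measurableSet_Icc] with s hsne hsmem
    rcases cover_aux t N s (by rw [ht0]; exact hsmem.1) (by rw [htN]; exact hsmem.2) with
      ⟨j, hj, e⟩ | ⟨j, hj, m⟩
    · exact absurd e (hsne j (Finset.mem_range.mpr (by omega)))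
    · exact hMbound j hj s m
  · -- bound on the integral of g
    have htele : (∫ s in (0:ℝ)..T, g s) = ∑ j ∈ Finset.range (N + 1), (P (t (j + 1)) - P (t j)) := by
      rw [Finset.sum_range_sub (fun j => P (t j)), htN, ht0, hPdef]
      simp
    have hterm : ∀ j ∈ Finset.range (N + 1), P (t (j + 1)) - P (t j) ≤
        ((C * M * t (j + 1) - C * M * t j) + (c₀ ^ 2 * Q (t (j + 1)) - c₀ ^ 2 * Q (t j))) +
          (Fp j - (if j = N then 0 else fm (j + 1))) := by
      intro j hj'
      have hj : j ≤ N := Nat.lt_succ_iff.mp (Finset.mem_range.mp hj')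
      by_cases hjeq : j = N
      · rw [hjeq, if_pos rfl]
        linarith [hPlast]
      · simp only [if_neg hjeq]
        linarith [hPj1' j (by omega)]
    have hsum1 := Finset.sum_le_sum hterm
    rw [Finset.sum_add_distrib, Finset.sum_add_distrib,
      Finset.sum_range_sub (fun j => C * M * t j),
      Finset.sum_range_sub (fun j => c₀ ^ 2 * Q (t j))] at hsum1
    have hFD : ∑ j ∈ Finset.range (N + 1), (Fp j - (if j = N then 0 else fm (j + 1))) ≤
        f 0 + (N : ℝ) * (c₁ * M) := by
      rw [Finset.sum_sub_distrib]
      have h1 : ∑ j ∈ Finset.range (N + 1), Fp j =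
          (∑ j ∈ Finset.range N, Fp (j + 1)) + Fp 0 := Finset.sum_range_succ' Fp N
      have h2 : ∑ j ∈ Finset.range (N + 1), (if j = N then (0:ℝ) else fm (j + 1)) =
          ∑ j ∈ Finset.range N, fm (j + 1) := by
        rw [Finset.sum_range_succ, if_pos rfl, add_zero]
        exact Finset.sum_congr rfl fun j hj =>
          if_neg (by have := Finset.mem_range.mp hj; omega)
      have h3 : ∑ j ∈ Finset.range N, Fp (j + 1) = ∑ j ∈ Finset.range N, fp (j + 1) :=
        Finset.sum_congr rfl fun j _ => by simp [hFpdef]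
      have h4 : ∀ j ∈ Finset.range N, fp (j + 1) - fm (j + 1) ≤ c₁ * M := by
        intro j hj
        have hjN : j + 1 ≤ N := Finset.mem_range.mp hj
        have h5 := hjump (j + 1) (by omega) hjN
        have h6 := hfmM j hjN
        have h7 : c₁ * fm (j + 1) ≤ c₁ * M := mul_le_mul_of_nonneg_left h6 hc₁.le
        linarith
      have h8 := Finset.sum_le_sum h4
      rw [Finset.sum_sub_distrib, Finset.sum_const, Finset.card_range, nsmul_eq_mul] at h8
      have h9 : Fp 0 = f 0 := by simp [hFpdef]
      rw [h1, h2, h3, h9]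
      linarith
    have hQt0 : Q (t 0) = 0 := by rw [ht0, hQ0]
    have hexp1 : (1:ℝ) ≤ Real.exp (C * T + C * c₀ + (N : ℝ) * c₁) := by
      apply Real.one_le_exp
      have a1 : 0 ≤ C * T := mul_nonneg hC.le hT0
      have a2 : 0 ≤ C * c₀ := mul_nonneg hC.le hc₀.le
      have a3 : 0 ≤ (N : ℝ) * c₁ := mul_nonneg (Nat.cast_nonneg N) hc₁.le
      linarith
    have hf0E : f 0 ≤ f 0 * Real.exp (C * T + C * c₀ + (N : ℝ) * c₁) := by
      nlinarith [hf0nn]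
    have hQTC : c₀ ^ 2 * Q T ≤ c₀ ^ 2 * C :=
      mul_le_mul_of_nonneg_left hQT (sq_nonneg c₀)
    rw [htele]
    have hfinal := le_trans hsum1 (by linarith [hFD] :
      (C * M * t (N + 1) - C * M * t 0) + (c₀ ^ 2 * Q (t (N + 1)) - c₀ ^ 2 * Q (t 0)) +
        ∑ j ∈ Finset.range (N + 1), (Fp j - (if j = N then 0 else fm (j + 1))) ≤
      (C * M * t (N + 1) - C * M * t 0) + (c₀ ^ 2 * Q (t (N + 1)) - c₀ ^ 2 * Q (t 0)) +
        (f 0 + (N : ℝ) * (c₁ * M)))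
    rw [htN, ht0] at hfinal
    rw [hQ0] at hfinal
    have key2 : ∑ j ∈ Finset.range (N + 1), (P (t (j + 1)) - P (t j)) ≤
        C * M * T + c₀ ^ 2 * C + (f 0 + (N : ℝ) * (c₁ * M)) := by
      linarith [hfinal, hQTC]
    rw [hMdef] at key2
    linarith [key2, hf0E]
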